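/- Let H be a connected graded commutative Hopf algebra, V a commutative unital algebra, Φ : H → V an algebra homomorphism, and R : V → V an idempotent algebra endomorphism (hence a Rota-Baxter operator of weight −1, i.e., R(a)R(b) = R(R(a)b + aR(b) − ab)). Define S_R^Φ recursively by S_R^Φ(𝟙) = 𝟙 and S_R^Φ(x) = −R(Φ(x) + Σ S_R^Φ(x')Φ(x'')) for x in the augmentation ideal, where Δ(x) = x⊗𝟙 + 𝟙⊗x + Σ x'⊗x''. Then S_R^Φ is an algebra homomorphism, and so is S_R^Φ ⋆ Φ. -/

import Mathlib

open TensorProduct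

section AuxForStmt15
open TensorProduct LinearMap



section Conv

variable {k : Type} [Field k] {C A : Type}
  [AddCommGroup C] [Module k C] [Coalgebra k C]
  [CommRing A] [Algebra k A]

/-- Convolution product of linear maps from a coalgebra to an algebra. -/
noncomputable def conv (f g : C →ₗ[k] A) : C →ₗ[k] A :=
  LinearMap.mul' k A ∘ₗ TensorProduct.map f g ∘ₗ Coalgebra.comul

/-- Convolution unit. -/
noncomputable def convUnit : C →ₗ[k] A :=
  Algebra.linearMap k A ∘ₗ Coalgebra.counit

lemma conv_apply_repr (f g : C →ₗ[k] A) {x : C} (r : Coalgebra.Repr k x (C × C)) :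
    conv f g x = ∑ i ∈ r.index, f (r.left i) * g (r.right i) := by
  simp [conv, ← r.eq, map_sum]

lemma convUnit_conv (f : C →ₗ[k] A) : conv convUnit f = f := by
  ext x
  have r := Coalgebra.Repr.arbitrary k x
  rw [conv_apply_repr _ _ r]
  have h : ∑ i ∈ r.index, Coalgebra.counit (R := k) (r.left i) • r.right i = x := by
    have := congrArg (TensorProduct.lid k C) (Coalgebra.sum_counit_tmul_eq r)
    simp only [map_sum, TensorProduct.lid_tmul] at this
    simpa using this
  calc ∑ i ∈ r.index, convUnit (r.left i) * f (r.right i)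
      = ∑ i ∈ r.index, f (Coalgebra.counit (R := k) (r.left i) • r.right i) := by
        refine Finset.sum_congr rfl fun i _ => ?_
        simp [convUnit, Algebra.smul_def]
    _ = f x := by rw [← map_sum, h]

lemma conv_convUnit (f : C →ₗ[k] A) : conv f convUnit = f := by
  ext x
  have r := Coalgebra.Repr.arbitrary k x
  rw [conv_apply_repr _ _ r]
  have h : ∑ i ∈ r.index, Coalgebra.counit (R := k) (r.right i) • r.left i = x := by
    have := congrArg (TensorProduct.rid k C) (Coalgebra.sum_tmul_counit_eq r)
    simp only [map_sum, TensorProduct.rid_tmul] at this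
    simpa using this
  calc ∑ i ∈ r.index, f (r.left i) * convUnit (r.right i)
      = ∑ i ∈ r.index, f (Coalgebra.counit (R := k) (r.right i) • r.left i) := by
        refine Finset.sum_congr rfl fun i _ => ?_
        simp [convUnit, Algebra.smul_def, mul_comm]
    _ = f x := by rw [← map_sum, h]

lemma conv_assoc (f g h : C →ₗ[k] A) : conv (conv f g) h = conv f (conv g h) := by
  have key : LinearMap.mul' k A ∘ₗ TensorProduct.map (LinearMap.mul' k A ∘ₗ TensorProduct.map f g) h =
      (LinearMap.mul' k A ∘ₗ TensorProduct.map f (LinearMap.mul' k A ∘ₗ TensorProduct.map g h)) ∘ₗ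
        (TensorProduct.assoc k C C C).toLinearMap := by
    apply TensorProduct.ext_threefold
    intro x y z
    simp [mul_assoc]
  have e1 : TensorProduct.map (conv f g) h
      = TensorProduct.map (LinearMap.mul' k A ∘ₗ TensorProduct.map f g) h ∘ₗ
        LinearMap.rTensor C (Coalgebra.comul (R := k)) := by
    rw [rTensor, ← TensorProduct.map_comp, conv, LinearMap.comp_assoc, LinearMap.comp_id]
  have e2 : TensorProduct.map f (conv g h)
      = TensorProduct.map f (LinearMap.mul' k A ∘ₗ TensorProduct.map g h) ∘ₗ
        LinearMap.lTensor C (Coalgebra.comul (R := k)) := by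
    rw [lTensor, ← TensorProduct.map_comp, conv, LinearMap.comp_assoc, LinearMap.comp_id]
  rw [show conv (conv f g) h
      = LinearMap.mul' k A ∘ₗ TensorProduct.map (conv f g) h ∘ₗ Coalgebra.comul from rfl,
    show conv f (conv g h)
      = LinearMap.mul' k A ∘ₗ TensorProduct.map f (conv g h) ∘ₗ Coalgebra.comul from rfl,
    e1, e2]
  simp only [← LinearMap.comp_assoc]
  rw [key]
  simp only [LinearMap.comp_assoc]
  rw [Coalgebra.coassoc]

end Conv
section Antipode

variable {k H : Type} [Field k] [CommRing H] [HopfAlgebra k H]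

lemma antipode_one' : HopfAlgebra.antipode (R := k) (1 : H) = 1 := by
  have := HopfAlgebra.mul_antipode_rTensor_comul_apply (R := k) (A := H) (1 : H)
  simpa [Algebra.TensorProduct.one_def] using this

lemma mapmm_ttc (s t : H ⊗[k] H) :
    TensorProduct.map (LinearMap.mul' k H) (LinearMap.mul' k H)
      (TensorProduct.tensorTensorTensorComm k H H H H (s ⊗ₜ[k] t)) = s * t := by
  induction s using TensorProduct.induction_on with
  | zero => simp
  | tmul a b =>
    induction t using TensorProduct.induction_on with
    | zero => simp
    | tmul c d => simp [Algebra.TensorProduct.tmul_mul_tmul]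
    | add t₁ t₂ h₁ h₂ => simp [tmul_add, mul_add, h₁, h₂]
  | add s₁ s₂ h₁ h₂ => simp [add_tmul, add_mul, h₁, h₂]

lemma comul_comp_mul :
    TensorProduct.map (LinearMap.mul' k H) (LinearMap.mul' k H) ∘ₗ
        (Coalgebra.comul (R := k) (A := H ⊗[k] H)) =
      Coalgebra.comul (R := k) (A := H) ∘ₗ LinearMap.mul' k H := by
  apply TensorProduct.ext'
  intro x y
  have hΔ : Coalgebra.comul (R := k) (A := H ⊗[k] H) (x ⊗ₜ[k] y)
      = TensorProduct.tensorTensorTensorComm k H H H H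
          ((Coalgebra.comul (R := k) x) ⊗ₜ[k] (Coalgebra.comul (R := k) y)) := rfl
  simp only [LinearMap.comp_apply, hΔ, mapmm_ttc, LinearMap.mul'_apply]
  rw [Bialgebra.comul_mul]

lemma counit_tmul (x y : H) :
    Coalgebra.counit (R := k) (A := H ⊗[k] H) (x ⊗ₜ[k] y)
      = Coalgebra.counit (R := k) x * Coalgebra.counit (R := k) y := by
  rw [TensorProduct.counit_tmul, smul_eq_mul, mul_comm]

lemma counit_comp_mul :
    (Coalgebra.counit (R := k) (A := H)) ∘ₗ LinearMap.mul' k H =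
      Coalgebra.counit (R := k) (A := H ⊗[k] H) := by
  apply TensorProduct.ext'
  intro x y
  simp only [LinearMap.comp_apply, LinearMap.mul'_apply, _root_.counit_tmul, Bialgebra.counit_mul]

lemma antipode_mul' (x y : H) :
    HopfAlgebra.antipode (R := k) (x * y) =
      HopfAlgebra.antipode (R := k) x * HopfAlgebra.antipode (R := k) y := by
  have hGF : conv (HopfAlgebra.antipode (R := k) ∘ₗ LinearMap.mul' k H) (LinearMap.mul' k H)
      = convUnit := by
    rw [show conv (HopfAlgebra.antipode (R := k) ∘ₗ LinearMap.mul' k H) (LinearMap.mul' k H)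
      = LinearMap.mul' k H ∘ₗ
          TensorProduct.map (HopfAlgebra.antipode (R := k) ∘ₗ LinearMap.mul' k H)
            (LinearMap.mul' k H) ∘ₗ Coalgebra.comul from rfl]
    have hmap : TensorProduct.map (HopfAlgebra.antipode (R := k) ∘ₗ LinearMap.mul' k H)
          (LinearMap.mul' k H)
        = LinearMap.rTensor H (HopfAlgebra.antipode (R := k)) ∘ₗ
            TensorProduct.map (LinearMap.mul' k H) (LinearMap.mul' k H) := by
      rw [LinearMap.rTensor, ← TensorProduct.map_comp, LinearMap.id_comp]
    rw [hmap]
    simp only [LinearMap.comp_assoc]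
    rw [comul_comp_mul]
    simp only [← LinearMap.comp_assoc]
    rw [show (LinearMap.mul' k H ∘ₗ LinearMap.rTensor H (HopfAlgebra.antipode (R := k))) ∘ₗ
        Coalgebra.comul = Algebra.linearMap k H ∘ₗ (Coalgebra.counit (R := k)) by
      simp only [LinearMap.comp_assoc]; exact HopfAlgebra.mul_antipode_rTensor_comul]
    rw [convUnit, LinearMap.comp_assoc, counit_comp_mul]
  have hFP : conv (LinearMap.mul' k H)
      (LinearMap.mul' k H ∘ₗ
        TensorProduct.map (HopfAlgebra.antipode (R := k)) (HopfAlgebra.antipode (R := k)))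
      = convUnit := by
    apply TensorProduct.ext'
    intro x y
    have rx := Coalgebra.Repr.arbitrary k x
    have ry := Coalgebra.Repr.arbitrary k y
    have hΔ : Coalgebra.comul (R := k) (A := H ⊗[k] H) (x ⊗ₜ[k] y)
        = ∑ i ∈ rx.index, ∑ j ∈ ry.index,
            (rx.left i ⊗ₜ[k] ry.left j) ⊗ₜ[k] (rx.right i ⊗ₜ[k] ry.right j) := by
      show TensorProduct.tensorTensorTensorComm k H H H H
          ((Coalgebra.comul (R := k) x) ⊗ₜ[k] (Coalgebra.comul (R := k) y)) = _
      rw [← rx.eq, ← ry.eq, TensorProduct.sum_tmul, map_sum]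
      refine Finset.sum_congr rfl fun i _ => ?_
      rw [TensorProduct.tmul_sum, map_sum]
      exact Finset.sum_congr rfl fun j _ => by simp
    rw [show conv (LinearMap.mul' k H)
        (LinearMap.mul' k H ∘ₗ
          TensorProduct.map (HopfAlgebra.antipode (R := k)) (HopfAlgebra.antipode (R := k)))
        (x ⊗ₜ[k] y)
      = LinearMap.mul' k H (TensorProduct.map (LinearMap.mul' k H)
          (LinearMap.mul' k H ∘ₗ
            TensorProduct.map (HopfAlgebra.antipode (R := k)) (HopfAlgebra.antipode (R := k)))
          (Coalgebra.comul (R := k) (x ⊗ₜ[k] y))) from rfl, hΔ]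
    simp only [map_sum, TensorProduct.map_tmul, LinearMap.comp_apply, TensorProduct.map_tmul,
      LinearMap.mul'_apply]
    calc ∑ i ∈ rx.index, ∑ j ∈ ry.index, rx.left i * ry.left j *
            (HopfAlgebra.antipode (R := k) (rx.right i) *
              HopfAlgebra.antipode (R := k) (ry.right j))
        = (∑ i ∈ rx.index, rx.left i * HopfAlgebra.antipode (R := k) (rx.right i)) *
            (∑ j ∈ ry.index, ry.left j * HopfAlgebra.antipode (R := k) (ry.right j)) := by
          rw [Finset.sum_mul_sum]
          exact Finset.sum_congr rfl fun i _ => Finset.sum_congr rfl fun j _ => by ring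
      _ = convUnit (x ⊗ₜ[k] y) := by
          rw [HopfAlgebra.sum_mul_antipode_eq_smul rx, HopfAlgebra.sum_mul_antipode_eq_smul ry]
          rw [show (convUnit (x ⊗ₜ[k] y) : H)
            = algebraMap k H (Coalgebra.counit (R := k) (A := H ⊗[k] H) (x ⊗ₜ[k] y)) from rfl,
            _root_.counit_tmul]
          simp [Algebra.smul_def]
  have hGP : HopfAlgebra.antipode (R := k) ∘ₗ LinearMap.mul' k H
      = LinearMap.mul' k H ∘ₗ
          TensorProduct.map (HopfAlgebra.antipode (R := k)) (HopfAlgebra.antipode (R := k)) := by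
    calc HopfAlgebra.antipode (R := k) ∘ₗ LinearMap.mul' k H
        = conv (HopfAlgebra.antipode (R := k) ∘ₗ LinearMap.mul' k H) convUnit :=
          (conv_convUnit _).symm
      _ = conv (HopfAlgebra.antipode (R := k) ∘ₗ LinearMap.mul' k H)
            (conv (LinearMap.mul' k H) (LinearMap.mul' k H ∘ₗ
              TensorProduct.map (HopfAlgebra.antipode (R := k))
                (HopfAlgebra.antipode (R := k)))) := by rw [hFP]
      _ = conv (conv (HopfAlgebra.antipode (R := k) ∘ₗ LinearMap.mul' k H)
            (LinearMap.mul' k H)) (LinearMap.mul' k H ∘ₗ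
              TensorProduct.map (HopfAlgebra.antipode (R := k))
                (HopfAlgebra.antipode (R := k))) := (conv_assoc _ _ _).symm
      _ = conv convUnit (LinearMap.mul' k H ∘ₗ
              TensorProduct.map (HopfAlgebra.antipode (R := k))
                (HopfAlgebra.antipode (R := k))) := by rw [hGF]
      _ = _ := convUnit_conv _
  have := congrArg (fun (L : H ⊗[k] H →ₗ[k] H) => L (x ⊗ₜ[k] y)) hGP
  simpa using this

end Antipode
section Graded

variable {k H : Type} [Field k] [CommRing H] [HopfAlgebra k H]

lemma comul_sub_mem (ℬ : ℕ → Submodule k H) [GradedAlgebra ℬ]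
    (hconn : ℬ 0 = Submodule.span k {1})
    (hgradedΔ : ∀ (n : ℕ), ∀ x ∈ ℬ n,
      Coalgebra.comul (R := k) x ∈
        ⨆ (p : ℕ × ℕ) (_ : p.1 + p.2 = n),
          LinearMap.range (TensorProduct.mapIncl (ℬ p.1) (ℬ p.2)))
    {n : ℕ} (_hn : 0 < n) {x : H} (hx : x ∈ ℬ n) :
    Coalgebra.comul (R := k) x - x ⊗ₜ[k] 1 ∈
      ⨆ (p : ℕ × ℕ) (_ : p.1 + p.2 = n ∧ p.1 < n),
        LinearMap.range (TensorProduct.mapIncl (ℬ p.1) (ℬ p.2)) := by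
  set Klt : Submodule k (H ⊗[k] H) :=
    ⨆ (p : ℕ × ℕ) (_ : p.1 + p.2 = n ∧ p.1 < n),
      LinearMap.range (TensorProduct.mapIncl (ℬ p.1) (ℬ p.2)) with hKlt
  have hsplit : (⨆ (p : ℕ × ℕ) (_ : p.1 + p.2 = n),
      LinearMap.range (TensorProduct.mapIncl (ℬ p.1) (ℬ p.2))) ≤
      Klt ⊔ LinearMap.range (TensorProduct.mapIncl (ℬ n) (ℬ 0)) := by
    refine iSup_le fun p => iSup_le fun hp => ?_
    by_cases hlt : p.1 < n
    · exact le_trans (le_iSup₂ (f := fun (p : ℕ × ℕ) (_ : p.1 + p.2 = n ∧ p.1 < n) =>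
        LinearMap.range (TensorProduct.mapIncl (ℬ p.1) (ℬ p.2))) p ⟨hp, hlt⟩) le_sup_left
    · have hp1 : p.1 = n := by omega
      have hp2 : p.2 = 0 := by omega
      have : p = (n, 0) := Prod.ext hp1 hp2
      subst this
      exact le_sup_right
  obtain ⟨u, hu, v, hv, huv⟩ := Submodule.mem_sup.mp (hsplit (hgradedΔ n x hx))
  have hv' : v ∈ Submodule.map ((TensorProduct.mk k H H).flip 1) (ℬ n) := by
    have hle : LinearMap.range (TensorProduct.mapIncl (ℬ n) (ℬ 0)) ≤
        Submodule.map ((TensorProduct.mk k H H).flip 1) (ℬ n) := by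
      rw [TensorProduct.mapIncl, TensorProduct.range_map_eq_span_tmul, Submodule.span_le]
      rintro t ⟨a, b, rfl⟩
      have hb : (b : H) ∈ Submodule.span k {(1 : H)} := by rw [← hconn]; exact b.2
      obtain ⟨c, hc⟩ := Submodule.mem_span_singleton.mp hb
      refine ⟨c • (a : H), Submodule.smul_mem _ c a.2, ?_⟩
      simp only [TensorProduct.mk_apply, LinearMap.flip_apply, Submodule.coe_subtype]
      rw [← hc, TensorProduct.tmul_smul, TensorProduct.smul_tmul']
    exact hle hv
  obtain ⟨z, hz, hzv⟩ := hv'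
  have hzv' : v = z ⊗ₜ[k] 1 := by
    rw [← hzv]; rfl
  set g : H ⊗[k] H →ₗ[k] H := (TensorProduct.rid k H).toLinearMap ∘ₗ
    LinearMap.lTensor H (Coalgebra.counit (R := k)) with hg
  have hgtmul : ∀ (a b : H), g (a ⊗ₜ[k] b) = Coalgebra.counit (R := k) b • a := by
    intro a b; simp [hg]
  have hgΔ : g (Coalgebra.comul (R := k) x) = x := by
    rw [hg]
    simp [Coalgebra.lTensor_counit_comul (R := k) x]
  have hgv : g (z ⊗ₜ[k] 1) = z := by
    rw [hgtmul]
    simp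
  have hgu : g u ∈ ⨆ (m : ℕ) (_ : m < n), ℬ m := by
    have hK : Klt ≤ Submodule.comap g (⨆ (m : ℕ) (_ : m < n), ℬ m) := by
      refine iSup_le fun p => iSup_le fun hp => ?_
      rw [TensorProduct.mapIncl, TensorProduct.range_map_eq_span_tmul, Submodule.span_le]
      rintro t ⟨a, b, rfl⟩
      simp only [SetLike.mem_coe, Submodule.mem_comap, Submodule.coe_subtype, hgtmul]
      exact Submodule.mem_iSup_of_mem p.1 (Submodule.mem_iSup_of_mem hp.2
        (Submodule.smul_mem _ _ a.2))
    exact hK hu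
  have hxz : x - z = g u := by
    have h := congrArg g huv
    rw [map_add, hgΔ, hzv', hgv] at h
    linear_combination -h
  have hdisj : Disjoint (ℬ n) (⨆ (m : ℕ) (_ : m < n), ℬ m) := by
    have hind := (DirectSum.Decomposition.isInternal ℬ).submodule_iSupIndep
    refine (hind n).mono_right ?_
    exact iSup_le fun m => iSup_le fun hm =>
      le_iSup₂ (f := fun (j : ℕ) (_ : j ≠ n) => ℬ j) m (by omega)
  have hxz0 : x - z = 0 := by
    have hmem : x - z ∈ ℬ n ⊓ (⨆ (m : ℕ) (_ : m < n), ℬ m) :=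
      ⟨sub_mem hx hz, hxz ▸ hgu⟩
    have := hdisj.le_bot hmem
    simpa using this
  have hxz' : x = z := by linear_combination hxz0
  have : Coalgebra.comul (R := k) x - x ⊗ₜ[k] 1 = u := by
    rw [← huv, hzv', hxz']
    abel
  rw [this]
  exact hu

end Graded

end AuxForStmt15



/-- Let `H` be a connected graded commutative Hopf algebra, `V` a commutative unital
algebra, `Φ : H → V` an algebra homomorphism, and `R : V → V` an idempotent algebra
endomorphism (hence a Rota-Baxter operator). Let `S` be the twisted antipode:
`S(𝟙) = 𝟙` and `S(x) = −R(Φ(x) + Σ S(x')Φ(x''))` for `x` in the augmentation ideal,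
where `Δ(x) = x ⊗ 𝟙 + 𝟙 ⊗ x + Σ x' ⊗ x''` (equivalently
`S(x) = −R(m_V((S ⊗ Φ)(Δ(x) − x ⊗ 𝟙)))`). Then `S` is an algebra homomorphism, and
so is the convolution `S ⋆ Φ`. -/
theorem stmt_15 {k H V : Type} [Field k] [CommRing H] [HopfAlgebra k H]
    [CommRing V] [Algebra k V]
    (ℬ : ℕ → Submodule k H) [GradedAlgebra ℬ]
    (hconn : ℬ 0 = Submodule.span k {1})
    (hgradedΔ : ∀ (n : ℕ), ∀ x ∈ ℬ n,
      Coalgebra.comul (R := k) x ∈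
        ⨆ (p : ℕ × ℕ) (_ : p.1 + p.2 = n),
          LinearMap.range (TensorProduct.mapIncl (ℬ p.1) (ℬ p.2)))
    (Φ : H →ₐ[k] V) (Ren : V →ₐ[k] V) (hRen : Ren.comp Ren = Ren)
    (S : H →ₗ[k] V) (hS1 : S 1 = 1)
    (hS : ∀ x : H, Coalgebra.counit (R := k) x = 0 →
      S x = - Ren (LinearMap.mul' k V
        (TensorProduct.map S Φ.toLinearMap (Coalgebra.comul x - x ⊗ₜ[k] 1)))) :
    (∀ a b : H, S (a * b) = S a * S b) ∧
    (∀ a b : H,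
      LinearMap.mul' k V (TensorProduct.map S Φ.toLinearMap
          (Coalgebra.comul (a * b))) =
        LinearMap.mul' k V (TensorProduct.map S Φ.toLinearMap (Coalgebra.comul a)) *
        LinearMap.mul' k V (TensorProduct.map S Φ.toLinearMap (Coalgebra.comul b))) ∧
    LinearMap.mul' k V (TensorProduct.map S Φ.toLinearMap
        (Coalgebra.comul (1 : H))) = 1 := by
  classical
  set T : H →ₗ[k] V :=
    Ren.toLinearMap ∘ₗ Φ.toLinearMap ∘ₗ HopfAlgebra.antipode (R := k) with hT
  have hRen' : ∀ v : V, Ren (Ren v) = Ren v := fun v => AlgHom.congr_fun hRen v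
  have hTapp : ∀ x : H, T x = Ren (Φ (HopfAlgebra.antipode (R := k) x)) := fun x => rfl
  have hT1 : T 1 = 1 := by
    rw [hTapp, antipode_one', map_one, map_one]
  have hTrec : ∀ x : H, Coalgebra.counit (R := k) x = 0 →
      T x = - Ren (LinearMap.mul' k V
        (TensorProduct.map T Φ.toLinearMap (Coalgebra.comul x - x ⊗ₜ[k] 1))) := by
    intro x hx
    have hw : ∀ w : H ⊗[k] H,
        Ren (LinearMap.mul' k V (TensorProduct.map T Φ.toLinearMap w))
          = Ren (Φ (LinearMap.mul' k H
              (LinearMap.rTensor H (HopfAlgebra.antipode (R := k)) w))) := by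
      intro w
      induction w using TensorProduct.induction_on with
      | zero => simp
      | tmul a b =>
        simp only [TensorProduct.map_tmul, LinearMap.rTensor_tmul, LinearMap.mul'_apply,
          AlgHom.toLinearMap_apply, hTapp, map_mul]
        rw [hRen']
      | add a b ha hb => simp only [map_add, ha, hb]
    rw [hw]
    have h1 : LinearMap.mul' k H
        (LinearMap.rTensor H (HopfAlgebra.antipode (R := k)) (Coalgebra.comul x)) = 0 := by
      rw [HopfAlgebra.mul_antipode_rTensor_comul_apply, hx, map_zero]
    rw [map_sub, map_sub, h1]
    simp [hTapp]
  have hSrec' : ∀ x : H,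
      S x - T x = - Ren (LinearMap.mul' k V
        (TensorProduct.map (S - T) Φ.toLinearMap (Coalgebra.comul x - x ⊗ₜ[k] 1))) := by
    intro x
    set c := Coalgebra.counit (R := k) x with hc
    have hy : Coalgebra.counit (R := k) (x - c • 1) = 0 := by
      rw [map_sub, map_smul, Bialgebra.counit_one, smul_eq_mul, mul_one, hc, sub_self]
    have h1 : Coalgebra.comul (R := k) (x - c • 1) - (x - c • 1) ⊗ₜ[k] 1
        = Coalgebra.comul (R := k) x - x ⊗ₜ[k] 1 := by
      rw [map_sub, map_smul, Bialgebra.comul_one, Algebra.TensorProduct.one_def,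
        TensorProduct.sub_tmul, TensorProduct.smul_tmul']
      abel
    have hSx := hS _ hy
    have hTx := hTrec _ hy
    rw [map_sub, map_smul, hS1, h1] at hSx
    rw [map_sub, map_smul, hT1, h1] at hTx
    have hmapsub : ∀ w : H ⊗[k] H, TensorProduct.map (S - T) Φ.toLinearMap w
        = TensorProduct.map S Φ.toLinearMap w - TensorProduct.map T Φ.toLinearMap w := by
      intro w
      induction w using TensorProduct.induction_on with
      | zero => simp
      | tmul a b => simp [TensorProduct.sub_tmul]
      | add a b ha hb =>
        simp only [map_add, ha, hb]
        abel
    rw [hmapsub, map_sub, map_sub]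
    have : S x - c • (1 : V) - (T x - c • (1 : V)) = S x - T x := by abel
    rw [← this, hSx, hTx]
    abel
  have hDzero : ∀ n : ℕ, ∀ x ∈ ℬ n, S x - T x = 0 := by
    intro n
    induction n using Nat.strong_induction_on with
    | _ n IH =>
      intro x hx
      rcases Nat.eq_zero_or_pos n with h0 | hpos
      · subst h0
        rw [hconn] at hx
        obtain ⟨c, hcx⟩ := Submodule.mem_span_singleton.mp hx
        rw [← hcx, map_smul, map_smul, hS1, hT1, sub_self]
      · rw [hSrec' x]
        have hmem := comul_sub_mem ℬ hconn hgradedΔ hpos hx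
        have hker : (⨆ (p : ℕ × ℕ) (_ : p.1 + p.2 = n ∧ p.1 < n),
            LinearMap.range (TensorProduct.mapIncl (ℬ p.1) (ℬ p.2))) ≤
            LinearMap.ker (LinearMap.mul' k V ∘ₗ TensorProduct.map (S - T) Φ.toLinearMap) := by
          refine iSup_le fun p => iSup_le fun hp => ?_
          rw [TensorProduct.mapIncl, TensorProduct.range_map_eq_span_tmul, Submodule.span_le]
          rintro t ⟨a, b, rfl⟩
          simp only [SetLike.mem_coe, LinearMap.mem_ker, LinearMap.comp_apply,
            TensorProduct.map_tmul, LinearMap.sub_apply, LinearMap.mul'_apply,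
            Submodule.coe_subtype]
          rw [IH p.1 hp.2 a a.2, zero_mul]
        have h0 := hker hmem
        rw [LinearMap.mem_ker, LinearMap.comp_apply] at h0
        rw [h0, map_zero, neg_zero]
  have hST : ∀ x : H, S x = Ren (Φ (HopfAlgebra.antipode (R := k) x)) := by
    intro x
    have htop : (⨆ n, ℬ n) = ⊤ :=
      (DirectSum.Decomposition.isInternal ℬ).submodule_iSup_eq_top
    have hker : (⊤ : Submodule k H) ≤ LinearMap.ker (S - T) := by
      rw [← htop]
      refine iSup_le fun n => fun y hy => ?_
      rw [LinearMap.mem_ker, LinearMap.sub_apply]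
      exact hDzero n y hy
    have := hker (Submodule.mem_top : x ∈ ⊤)
    rw [LinearMap.mem_ker, LinearMap.sub_apply, sub_eq_zero] at this
    rw [this, hTapp]
  have part1 : ∀ a b : H, S (a * b) = S a * S b := by
    intro a b
    rw [hST, hST, hST, antipode_mul', map_mul, map_mul]
  set SAlg : H →ₐ[k] V := AlgHom.ofLinearMap S hS1 part1 with hSAlg
  set lift : H ⊗[k] H →ₐ[k] V :=
    Algebra.TensorProduct.lift SAlg Φ (fun a b => Commute.all _ _) with hlift
  have hliftw : ∀ w : H ⊗[k] H,
      LinearMap.mul' k V (TensorProduct.map S Φ.toLinearMap w) = lift w := by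
    intro w
    induction w using TensorProduct.induction_on with
    | zero => simp
    | tmul a b =>
      simp only [TensorProduct.map_tmul, LinearMap.mul'_apply, AlgHom.toLinearMap_apply, hlift,
        Algebra.TensorProduct.lift_tmul]
      rfl
    | add a b ha hb => simp only [map_add, ha, hb]
  refine ⟨part1, fun a b => ?_, ?_⟩
  · rw [hliftw, hliftw, hliftw, Bialgebra.comul_mul, map_mul]
  · rw [Bialgebra.comul_one, hliftw, map_one]
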